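/- arXiv:1910.03490 — 12 statements merged into one kernel-verified Lean document; each statement's English description precedes it below -/
import Mathlib

section
/- Let W satisfy W(n) = r·W(n-1) + s·W(n-2) + t·W(n-3) for n ≥ 3. If (r+s+t-1)(r-s+t+1) ≠ 0, then for all n ≥ 0, ∑_{k=0}^{n} W(2k) = ((1-s)·W(2n+2) + (t+rs)·W(2n+1) + (t²+rt)·W(2n) + (s-1)·W(2) + (-t-rs)·W(1) + (r² - s² + rt + 2s - 1)·W(0)) / ((r+s+t-1)(r-s+t+1)). -/
theorem sum_gen_tribonacci_even (W : ℕ → ℂ) (r s t : ℂ)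
    (hrec : ∀ n, 3 ≤ n → W n = r * W (n-1) + s * W (n-2) + t * W (n-3))
    (h : (r+s+t-1) * (r-s+t+1) ≠ 0) :
    ∀ n : ℕ, ∑ k ∈ Finset.range (n+1), W (2*k) =
      ((1-s) * W (2*n+2) + (t+r*s) * W (2*n+1) + (t^2+r*t) * W (2*n)
        + (s-1) * W 2 + (-t-r*s) * W 1 + (r^2 - s^2 + r*t + 2*s - 1) * W 0)
      / ((r+s+t-1) * (r-s+t+1)) := by
  intro n
  induction n with
  | zero =>
    rw [Finset.sum_range_one, show 2*0 = 0 from rfl, eq_div_iff h]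
    ring
  | succ n ih =>
    rw [Finset.sum_range_succ, ih]
    have e1 : 2 * (n+1) = 2*n+2 := by ring
    have e2 : 2*n+2 + 1 = 2*n+3 := by ring
    have e3 : 2*n+2 + 2 = 2*n+4 := by ring
    rw [e1, e2, e3]
    have h1 := hrec (2*n+4) (by omega)
    have h2 := hrec (2*n+3) (by omega)
    simp only [show 2*n+4-1 = 2*n+3 from by omega, show 2*n+4-2 = 2*n+2 from by omega,
      show 2*n+4-3 = 2*n+1 from by omega, show 2*n+3-1 = 2*n+2 from by omega,
      show 2*n+3-2 = 2*n+1 from by omega, show 2*n+3-3 = 2*n from by omega] at h1 h2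
    rw [div_add' _ _ _ h, div_eq_div_iff h h]
    linear_combination (-((r+s+t-1)*(r-s+t+1))) * ((1-s)*h1 + (r+t)*h2)
end

section
/- Let W satisfy W(n) = r·W(n-1) + s·W(n-2) + t·W(n-3) for n ≥ 3. If (r+s+t-1)(r-s+t+1) ≠ 0, then for all n ≥ 0, ∑_{k=0}^{n} W(2k+1) = ((r+t)·W(2n+2) + (s - s² + t² + rt)·W(2n+1) + (t - st)·W(2n) + (-r-t)·W(2) + (r² + rt + s - 1)·W(1) + (st - t)·W(0)) / ((r-s+t+1)(r+s+t-1)). -/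
theorem sum_gen_tribonacci_odd (W : ℕ → ℂ) (r s t : ℂ)
    (hrec : ∀ n, 3 ≤ n → W n = r * W (n-1) + s * W (n-2) + t * W (n-3))
    (h : (r+s+t-1) * (r-s+t+1) ≠ 0) :
    ∀ n : ℕ, ∑ k ∈ Finset.range (n+1), W (2*k+1) =
      ((r+t) * W (2*n+2) + (s - s^2 + t^2 + r*t) * W (2*n+1) + (t - s*t) * W (2*n)
        + (-r-t) * W 2 + (r^2 + r*t + s - 1) * W 1 + (s*t - t) * W 0)
      / ((r-s+t+1) * (r+s+t-1)) := by
  have h' : (r-s+t+1) * (r+s+t-1) ≠ 0 := by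
    intro hc; exact h (by linear_combination hc)
  intro n
  induction n with
  | zero =>
    rw [Finset.sum_range_one]
    rw [eq_div_iff h']
    ring
  | succ n ih =>
    rw [Finset.sum_range_succ, ih]
    have e1 : W (2*n+4) = r * W (2*n+3) + s * W (2*n+2) + t * W (2*n+1) :=
      hrec (2*n+4) (by omega)
    have e2 : W (2*n+3) = r * W (2*n+2) + s * W (2*n+1) + t * W (2*n) :=
      hrec (2*n+3) (by omega)
    rw [show 2*(n+1)+2 = 2*n+4 from by ring, show 2*(n+1)+1 = 2*n+3 from by ring,
      show 2*(n+1) = 2*n+2 from by ring, e1, e2]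
    rw [div_add' _ _ _ h', div_left_inj' h']
    ring
end

section
/- Let W satisfy W(n) = r·W(n-1) + W(n-2) + t·W(n-3) for n ≥ 3 (i.e., s = 1), with r + t ≠ 0. Then for all n ≥ 0, ∑_{k=0}^{n} W(2k) = (W(2n+1) + t·W(2n) - W(1) + r·W(0)) / (r+t) and ∑_{k=0}^{n} W(2k+1) = (W(2n+2) + t·W(2n+1) - W(2) + r·W(1)) / (r+t). -/
theorem sum_gen_tribonacci_s_eq_one (W : ℕ → ℂ) (r t : ℂ)
    (hrec : ∀ n, 3 ≤ n → W n = r * W (n-1) + W (n-2) + t * W (n-3))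
    (h : r + t ≠ 0) :
    ∀ n : ℕ,
      (∑ k ∈ Finset.range (n+1), W (2*k) =
        (W (2*n+1) + t * W (2*n) - W 1 + r * W 0) / (r+t)) ∧
      (∑ k ∈ Finset.range (n+1), W (2*k+1) =
        (W (2*n+2) + t * W (2*n+1) - W 2 + r * W 1) / (r+t)) := by
  intro n
  induction n with
  | zero =>
    constructor <;> simp <;> field_simp <;> ring
  | succ n ih =>
    obtain ⟨ih1, ih2⟩ := ih
    have h1 := hrec (2*n+3) (by omega)
    have h2 := hrec (2*n+4) (by omega)
    simp only [show 2*n+3-1 = 2*n+2 from by omega, show 2*n+3-2 = 2*n+1 from by omega,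
      show 2*n+3-3 = 2*n from by omega, show 2*n+4-1 = 2*n+3 from by omega,
      show 2*n+4-2 = 2*n+2 from by omega, show 2*n+4-3 = 2*n+1 from by omega] at h1 h2
    constructor
    · rw [Finset.sum_range_succ, ih1,
        show 2*(n+1) = 2*n+2 from by ring, show 2*n+2+1 = 2*n+3 from rfl]
      field_simp
      linear_combination -h1
    · rw [Finset.sum_range_succ, ih2,
        show 2*(n+1)+1 = 2*n+3 from by ring, show 2*(n+1)+2 = 2*n+4 from by ring]
      field_simp
      linear_combination -h2
end

section
/- For the Tribonacci numbers T, for all n ≥ 0: ∑_{k=0}^{n} T(2k) = (T(2n+1) + T(2n) - 1)/2 and ∑_{k=0}^{n} T(2k+1) = (T(2n+2) + T(2n+1))/2. -/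
theorem sum_tribonacci_even_odd (T : ℕ → ℕ) (h0 : T 0 = 0) (h1 : T 1 = 1) (h2 : T 2 = 1)
    (hrec : ∀ n, 3 ≤ n → T n = T (n-1) + T (n-2) + T (n-3)) :
    ∀ n : ℕ,
      (∑ k ∈ Finset.range (n+1), T (2*k) = (T (2*n+1) + T (2*n) - 1) / 2) ∧
      (∑ k ∈ Finset.range (n+1), T (2*k+1) = (T (2*n+2) + T (2*n+1)) / 2) := by
  have key : ∀ n : ℕ,
      2 * (∑ k ∈ Finset.range (n+1), T (2*k)) + 1 = T (2*n+1) + T (2*n) ∧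
      2 * (∑ k ∈ Finset.range (n+1), T (2*k+1)) = T (2*n+2) + T (2*n+1) := by
    intro n
    induction n with
    | zero => simp [h0, h1, h2]
    | succ m ih =>
      obtain ⟨ih1, ih2⟩ := ih
      have r1 := hrec (2*m+3) (by omega)
      have r2 := hrec (2*m+4) (by omega)
      simp only [show 2*m+3-1 = 2*m+2 from rfl, show 2*m+3-2 = 2*m+1 from rfl,
        show 2*m+3-3 = 2*m from rfl, show 2*m+4-1 = 2*m+3 from rfl,
        show 2*m+4-2 = 2*m+2 from rfl, show 2*m+4-3 = 2*m+1 from rfl] at r1 r2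
      constructor
      · rw [Finset.sum_range_succ, show 2*(m+1)+1 = 2*m+3 from by ring,
          show 2*(m+1) = 2*m+2 from by ring]
        omega
      · rw [Finset.sum_range_succ, show 2*(m+1)+2 = 2*m+4 from by ring,
          show 2*(m+1)+1 = 2*m+3 from by ring]
        omega
  intro n
  obtain ⟨k1, k2⟩ := key n
  omega
end

section
/- For the Tribonacci-Lucas numbers K (K(0)=3, K(1)=1, K(2)=3, K(n)=K(n-1)+K(n-2)+K(n-3)), for all n ≥ 0: ∑_{k=0}^{n} K(k) = (K(n+3) - K(n+1))/2, ∑_{k=0}^{n} K(2k) = (K(2n+1) + K(2n) + 2)/2, and ∑_{k=0}^{n} K(2k+1) = (K(2n+2) + K(2n+1) - 2)/2. -/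
theorem sum_tribonacci_lucas (K : ℕ → ℕ) (h0 : K 0 = 3) (h1 : K 1 = 1) (h2 : K 2 = 3)
    (hrec : ∀ n, 3 ≤ n → K n = K (n-1) + K (n-2) + K (n-3)) :
    ∀ n : ℕ,
      (∑ k ∈ Finset.range (n+1), K k = (K (n+3) - K (n+1)) / 2) ∧
      (∑ k ∈ Finset.range (n+1), K (2*k) = (K (2*n+1) + K (2*n) + 2) / 2) ∧
      (∑ k ∈ Finset.range (n+1), K (2*k+1) = (K (2*n+2) + K (2*n+1) - 2) / 2) := by
  have hr : ∀ m, K (m+3) = K (m+2) + K (m+1) + K m := by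
    intro m
    have h := hrec (m+3) (by omega)
    simpa using h
  have key : ∀ n, 2*(∑ k ∈ Finset.range (n+1), K k) + K (n+1) = K (n+3) ∧
      2*(∑ k ∈ Finset.range (n+1), K (2*k)) = K (2*n+1) + K (2*n) + 2 ∧
      2*(∑ k ∈ Finset.range (n+1), K (2*k+1)) + 2 = K (2*n+2) + K (2*n+1) := by
    intro n
    induction n with
    | zero =>
      have h3 := hr 0
      simp only [Finset.sum_range_one, Nat.mul_zero, Nat.zero_add] at *
      refine ⟨by omega, by omega, by omega⟩
    | succ n ih =>
      obtain ⟨hA, hB, hC⟩ := ih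
      refine ⟨?_, ?_, ?_⟩
      · rw [Finset.sum_range_succ]
        show 2*(_ + K (n+1)) + K (n+2) = K (n+4)
        have h4 : K (n+4) = K (n+3) + K (n+2) + K (n+1) := hr (n+1)
        omega
      · rw [Finset.sum_range_succ]
        show 2*(_ + K (2*n+2)) = K (2*n+3) + K (2*n+2) + 2
        have h4 : K (2*n+3) = K (2*n+2) + K (2*n+1) + K (2*n) := hr (2*n)
        omega
      · rw [Finset.sum_range_succ]
        show 2*(_ + K (2*n+3)) + 2 = K (2*n+4) + K (2*n+3)
        have h4 : K (2*n+4) = K (2*n+3) + K (2*n+2) + K (2*n+1) := hr (2*n+1)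
        omega
  intro n
  obtain ⟨hA, hB, hC⟩ := key n
  exact ⟨by omega, by omega, by omega⟩
end

section
/- For the third-order Pell numbers P, for all n ≥ 0: ∑_{k=0}^{n} P(2k) = (P(2n+1) + P(2n) - 1)/3 and ∑_{k=0}^{n} P(2k+1) = (P(2n+2) + P(2n+1))/3. -/
theorem sum_third_order_pell_even_odd (P : ℕ → ℕ) (h0 : P 0 = 0) (h1 : P 1 = 1) (h2 : P 2 = 2)
    (hrec : ∀ n, 3 ≤ n → P n = 2 * P (n-1) + P (n-2) + P (n-3)) :
    ∀ n : ℕ,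
      (∑ k ∈ Finset.range (n+1), P (2*k) = (P (2*n+1) + P (2*n) - 1) / 3) ∧
      (∑ k ∈ Finset.range (n+1), P (2*k+1) = (P (2*n+2) + P (2*n+1)) / 3) := by
  have key : ∀ n : ℕ,
      3 * (∑ k ∈ Finset.range (n+1), P (2*k)) + 1 = P (2*n+1) + P (2*n) ∧
      3 * (∑ k ∈ Finset.range (n+1), P (2*k+1)) = P (2*n+2) + P (2*n+1) := by
    intro n
    induction n with
    | zero => simp [h0, h1, h2]
    | succ m ih =>
      obtain ⟨ih1, ih2⟩ := ih
      have r1 := hrec (2*m+3) (by omega)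
      have r2 := hrec (2*m+4) (by omega)
      simp only [show 2*m+3-1 = 2*m+2 from rfl, show 2*m+3-2 = 2*m+1 from rfl,
        show 2*m+3-3 = 2*m from rfl, show 2*m+4-1 = 2*m+3 from rfl,
        show 2*m+4-2 = 2*m+2 from rfl, show 2*m+4-3 = 2*m+1 from rfl] at r1 r2
      constructor
      · rw [Finset.sum_range_succ, show 2*(m+1) = 2*m+2 by ring,
          show 2*m+2+1 = 2*m+3 by ring]
        omega
      · rw [Finset.sum_range_succ, show 2*(m+1)+1 = 2*m+3 by ring]
        rw [show 2*(m+1)+2 = 2*m+4 by ring]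
        omega
  intro n
  obtain ⟨k1, k2⟩ := key n
  omega
end

section
/- Let W satisfy W(n) = 2·W(n-2) + W(n-3) for n ≥ 3. Then for all n ≥ 0: ∑_{k=0}^{n} W(2k) = W(2n+1) + (W(2)-W(1)-W(0))·n + W(0) - W(1), and ∑_{k=0}^{n} W(2k+1) = (W(2n+3) + W(2n+2) - W(2n+1) + 2n·(W(1)+W(0)-W(2)) - W(2) + W(1) - W(0))/2. -/
lemma oddD (W : ℕ → ℂ)
    (hrec : ∀ n, 3 ≤ n → W n = 2 * W (n-2) + W (n-3)) :
    ∀ n : ℕ, W (2*n+3) - W (2*n+2) - W (2*n+1) = W 1 + W 0 - W 2 := by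
  intro n
  induction n with
  | zero =>
    have h3 := hrec 3 (by omega)
    norm_num at h3 ⊢
    rw [h3]; ring
  | succ m ih =>
    have h1 := hrec (2*m+5) (by omega)
    rw [show 2*m+5-2 = 2*m+3 by omega, show 2*m+5-3 = 2*m+2 by omega] at h1
    have h2 := hrec (2*m+4) (by omega)
    rw [show 2*m+4-2 = 2*m+2 by omega, show 2*m+4-3 = 2*m+1 by omega] at h2
    have e1 : 2*(m+1)+3 = 2*m+5 := by ring
    have e2 : 2*(m+1)+2 = 2*m+4 := by ring
    have e3 : 2*(m+1)+1 = 2*m+3 := by ring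
    rw [e1, e2, e3, h1, h2]
    linear_combination ih

theorem sum_pell_padovan_type (W : ℕ → ℂ)
    (hrec : ∀ n, 3 ≤ n → W n = 2 * W (n-2) + W (n-3)) :
    ∀ n : ℕ,
      (∑ k ∈ Finset.range (n+1), W (2*k) =
        W (2*n+1) + (W 2 - W 1 - W 0) * (n : ℂ) + W 0 - W 1) ∧
      (∑ k ∈ Finset.range (n+1), W (2*k+1) =
        (W (2*n+3) + W (2*n+2) - W (2*n+1)
          + 2 * (n : ℂ) * (W 1 + W 0 - W 2) - W 2 + W 1 - W 0) / 2) := by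
  intro n
  induction n with
  | zero =>
    have h3 := hrec 3 (by omega)
    norm_num at h3 ⊢
    rw [h3]; ring
  | succ m ih =>
    obtain ⟨ih1, ih2⟩ := ih
    have hD := oddD W hrec m
    have h1 := hrec (2*m+5) (by omega)
    rw [show 2*m+5-2 = 2*m+3 by omega, show 2*m+5-3 = 2*m+2 by omega] at h1
    have h2 := hrec (2*m+4) (by omega)
    rw [show 2*m+4-2 = 2*m+2 by omega, show 2*m+4-3 = 2*m+1 by omega] at h2
    constructor
    · rw [Finset.sum_range_succ, ih1]
      rw [show 2*(m+1)+1 = 2*m+3 by ring, show 2*(m+1) = 2*m+2 by ring]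
      push_cast
      linear_combination (-1)*hD
    · rw [Finset.sum_range_succ, ih2]
      rw [show 2*(m+1)+3 = 2*m+5 by ring, show 2*(m+1)+2 = 2*m+4 by ring,
        show 2*(m+1)+1 = 2*m+3 by ring, h1, h2]
      push_cast
      linear_combination hD
end

section
/- For the Pell-Padovan numbers R (R(0)=1, R(1)=1, R(2)=1, R(n)=2R(n-2)+R(n-3)), for all n ≥ 0: ∑_{k=0}^{n} R(k) = (R(n+3)+R(n+2)-R(n+1)-1)/2, ∑_{k=0}^{n} R(2k) = R(2n+1) - n, and ∑_{k=0}^{n} R(2k+1) = (R(2n+3)+R(2n+2)-R(2n+1)+2n-1)/2. -/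
theorem sum_pell_padovan (R : ℕ → ℕ) (h0 : R 0 = 1) (h1 : R 1 = 1) (h2 : R 2 = 1)
    (hrec : ∀ n, 3 ≤ n → R n = 2 * R (n-2) + R (n-3)) :
    ∀ n : ℕ,
      (∑ k ∈ Finset.range (n+1), R k = (R (n+3) + R (n+2) - R (n+1) - 1) / 2) ∧
      (∑ k ∈ Finset.range (n+1), R (2*k) = R (2*n+1) - n) ∧
      (∑ k ∈ Finset.range (n+1), R (2*k+1) = (R (2*n+3) + R (2*n+2) - R (2*n+1) + 2*n - 1) / 2) := by
  have h3 : ∀ n, R (n+3) = 2 * R (n+1) + R n := fun n => hrec (n+3) (by omega)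
  -- total sum identity
  have hC : ∀ n, R (n+3) + R (n+2) = R (n+1) + 1 + 2 * ∑ k ∈ Finset.range (n+1), R k := by
    intro n
    induction n with
    | zero => simp [h3 0, h0, h1, h2]
    | succ m ih =>
      rw [Finset.sum_range_succ]
      simp only [show m+1+3 = m+4 from rfl, show m+1+2 = m+3 from rfl,
        show m+1+1 = m+2 from rfl]
      have e : R (m+4) = 2 * R (m+2) + R (m+1) := h3 (m+1)
      omega
  -- even/odd pointwise identities
  have hAB : ∀ n, R (2*n+1) = n + ∑ k ∈ Finset.range (n+1), R (2*k) ∧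
      R (2*n+2) + 1 = n + (∑ k ∈ Finset.range (n+1), R (2*k)) + R (2*n) := by
    intro n
    induction n with
    | zero => simp [h0, h1, h2]
    | succ m ih =>
      obtain ⟨hA, hB⟩ := ih
      have e1 : R (2*m+3) = 2 * R (2*m+1) + R (2*m) := h3 (2*m)
      have e2 : R (2*m+4) = 2 * R (2*m+2) + R (2*m+1) := h3 (2*m+1)
      rw [Finset.sum_range_succ]
      simp only [show 2*(m+1)+1 = 2*m+3 from rfl, show 2*(m+1)+2 = 2*m+4 from rfl,
        show 2*(m+1) = 2*m+2 from rfl, show 2*m+2+1 = 2*m+3 from rfl, show 2*m+2+2 = 2*m+4 from rfl]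
      constructor <;> omega
  -- odd sum identity
  have hD : ∀ n, R (2*n+3) + R (2*n+2) + 2*n = R (2*n+1) + 1 + 2 * ∑ k ∈ Finset.range (n+1), R (2*k+1) := by
    intro n
    induction n with
    | zero => simp [h3 0, h0, h1, h2]
    | succ m ih =>
      obtain ⟨hA, hB⟩ := hAB m
      have e1 : R (2*m+3) = 2 * R (2*m+1) + R (2*m) := h3 (2*m)
      have e2 : R (2*m+4) = 2 * R (2*m+2) + R (2*m+1) := h3 (2*m+1)
      have e3 : R (2*m+5) = 2 * R (2*m+3) + R (2*m+2) := h3 (2*m+2)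
      rw [Finset.sum_range_succ]
      simp only [show 2*(m+1)+1 = 2*m+3 from rfl, show 2*(m+1)+2 = 2*m+4 from rfl,
        show 2*(m+1)+3 = 2*m+5 from rfl]
      omega
  intro n
  obtain ⟨hA, _⟩ := hAB n
  have hc := hC n
  have hd := hD n
  refine ⟨by omega, by omega, by omega⟩
end

section
/- For the Narayana numbers N (N(0)=0, N(1)=1, N(2)=1, N(n)=N(n-1)+N(n-3)), for all n ≥ 0: ∑_{k=0}^{n} N(k) = N(n+3) - 1, ∑_{k=0}^{n} N(2k) = (N(2n+2)+N(2n+1)+2N(2n)-2)/3, and ∑_{k=0}^{n} N(2k+1) = (2N(2n+2)+2N(2n+1)+N(2n)-1)/3. -/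
theorem sum_narayana (N : ℕ → ℕ) (h0 : N 0 = 0) (h1 : N 1 = 1) (h2 : N 2 = 1)
    (hrec : ∀ n, 3 ≤ n → N n = N (n-1) + N (n-3)) :
    ∀ n : ℕ,
      (∑ k ∈ Finset.range (n+1), N k = N (n+3) - 1) ∧
      (∑ k ∈ Finset.range (n+1), N (2*k) = (N (2*n+2) + N (2*n+1) + 2 * N (2*n) - 2) / 3) ∧
      (∑ k ∈ Finset.range (n+1), N (2*k+1) = (2 * N (2*n+2) + 2 * N (2*n+1) + N (2*n) - 1) / 3) := by
  have r : ∀ m : ℕ, N (m+3) = N (m+2) + N m := by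
    intro m
    have := hrec (m+3) (by omega)
    simpa using this
  have key : ∀ n : ℕ,
      (∑ k ∈ Finset.range (n+1), N k) + 1 = N (n+3) ∧
      3 * (∑ k ∈ Finset.range (n+1), N (2*k)) + 2 = N (2*n+2) + N (2*n+1) + 2 * N (2*n) ∧
      3 * (∑ k ∈ Finset.range (n+1), N (2*k+1)) + 1 = 2 * N (2*n+2) + 2 * N (2*n+1) + N (2*n) := by
    intro n
    induction n with
    | zero =>
      have := r 0
      simp [h0, h1, h2] at *
      omega
    | succ n ih =>
      obtain ⟨i1, i2, i3⟩ := ih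
      rw [Finset.sum_range_succ, Finset.sum_range_succ (f := fun k => N (2*k)),
        Finset.sum_range_succ (f := fun k => N (2*k+1))]
      have r1 : N (n+4) = N (n+3) + N (n+1) := by
        have h := r (n+1); rwa [show n+1+3=n+4 by ring, show n+1+2=n+3 by ring] at h
      have r2 : N (2*n+4) = N (2*n+3) + N (2*n+1) := by
        have h := r (2*n+1); rwa [show 2*n+1+3=2*n+4 by ring, show 2*n+1+2=2*n+3 by ring] at h
      have r3 : N (2*n+3) = N (2*n+2) + N (2*n) := r (2*n)
      have r4 : N (2*n+5) = N (2*n+4) + N (2*n+2) := by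
        have h := r (2*n+2); rwa [show 2*n+2+3=2*n+5 by ring, show 2*n+2+2=2*n+4 by ring] at h
      rw [show n+1+3=n+4 by ring, show 2*(n+1)=2*n+2 by ring, show 2*n+2+2=2*n+4 by ring,
        show 2*n+2+1=2*n+3 by ring]
      omega
  intro n
  obtain ⟨k1, k2, k3⟩ := key n
  refine ⟨by omega, by omega, by omega⟩
end

section
/- For the third order Jacobsthal numbers J (J(0)=0, J(1)=1, J(2)=1, J(n)=J(n-1)+J(n-2)+2J(n-3)), for all n ≥ 0: ∑_{k=0}^{n} J(k) = (J(n+3)-J(n+1)-1)/3, ∑_{k=0}^{n} J(2k) = (J(2n+1)+2J(2n)-1)/3, and ∑_{k=0}^{n} J(2k+1) = (J(2n+2)+2J(2n+1))/3. -/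
theorem sum_third_order_jacobsthal (J : ℕ → ℕ) (h0 : J 0 = 0) (h1 : J 1 = 1) (h2 : J 2 = 1)
    (hrec : ∀ n, 3 ≤ n → J n = J (n-1) + J (n-2) + 2 * J (n-3)) :
    ∀ n : ℕ,
      (∑ k ∈ Finset.range (n+1), J k = (J (n+3) - J (n+1) - 1) / 3) ∧
      (∑ k ∈ Finset.range (n+1), J (2*k) = (J (2*n+1) + 2 * J (2*n) - 1) / 3) ∧
      (∑ k ∈ Finset.range (n+1), J (2*k+1) = (J (2*n+2) + 2 * J (2*n+1)) / 3) := by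
  have hrec' : ∀ n, J (n+3) = J (n+2) + J (n+1) + 2 * J n := by
    intro n
    have h := hrec (n+3) (by omega)
    simpa using h
  have hA : ∀ n, J (n+3) = 3 * (∑ k ∈ Finset.range (n+1), J k) + J (n+1) + 1 := by
    intro n
    induction n with
    | zero => simp [hrec' 0, h0, h1, h2]
    | succ m ih =>
      rw [Finset.sum_range_succ]
      have := hrec' (m+1)
      simp only [show m+1+1=m+2 from rfl, show m+1+2=m+3 from rfl, show m+1+3=m+4 from rfl] at *
      omega
  have hB : ∀ n, J (2*n+1) + 2 * J (2*n) = 3 * (∑ k ∈ Finset.range (n+1), J (2*k)) + 1 := by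
    intro n
    induction n with
    | zero => simp [h0, h1]
    | succ m ih =>
      rw [Finset.sum_range_succ]
      have h3 := hrec' (2*m)
      have : 2*(m+1)+1 = (2*m)+3 := by ring
      rw [this]
      have h4 : 2*(m+1) = 2*m+2 := by ring
      rw [h4]
      rw [hrec' (2*m)]
      omega
  have hC : ∀ n, J (2*n+2) + 2 * J (2*n+1) = 3 * (∑ k ∈ Finset.range (n+1), J (2*k+1)) := by
    intro n
    induction n with
    | zero => simp [h1, h2]
    | succ m ih =>
      rw [Finset.sum_range_succ]
      have h3 : 2*(m+1)+2 = (2*m+1)+3 := by ring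
      have h4 : 2*(m+1)+1 = 2*m+3 := by ring
      rw [h3, h4, hrec' (2*m+1)]
      simp only [show 2*m+1+1=2*m+2 from rfl, show 2*m+1+2=2*m+3 from rfl] at *
      omega
  intro n
  refine ⟨?_, ?_, ?_⟩
  · have := hA n; omega
  · have := hB n; omega
  · have := hC n; omega
end

section
/- Let W : ℤ → ℂ satisfy W(n) = r·W(n-1) + s·W(n-2) + t·W(n-3) for all integers n, with t ≠ 0 and r+s+t-1 ≠ 0. Then for all n ≥ 1, ∑_{k=1}^{n} W(-k) = (-(r+s+t)·W(-n-1) - (s+t)·W(-n-2) - t·W(-n-3) + W(2) + (1-r)·W(1) + (1-r-s)·W(0)) / (r+s+t-1). -/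
theorem sum_gen_tribonacci_neg (W : ℤ → ℂ) (r s t : ℂ)
    (hrec : ∀ n : ℤ, W n = r * W (n-1) + s * W (n-2) + t * W (n-3))
    (ht : t ≠ 0) (h : r + s + t - 1 ≠ 0) :
    ∀ n : ℕ, 1 ≤ n →
      ∑ k ∈ Finset.Icc 1 n, W (-(k : ℤ)) =
        (-(r+s+t) * W (-(n : ℤ)-1) - (s+t) * W (-(n : ℤ)-2) - t * W (-(n : ℤ)-3)
          + W 2 + (1-r) * W 1 + (1-r-s) * W 0) / (r+s+t-1) := by
  intro n hn
  induction n with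
  | zero => omega
  | succ m ih =>
    rcases Nat.eq_or_lt_of_le hn with h1 | h1
    · -- m+1 = 1
      have hm : m = 0 := by omega
      subst hm
      simp only [Finset.Icc_self, Finset.sum_singleton]
      rw [eq_div_iff h]
      push_cast
      have e2 := hrec 2
      have e1 := hrec 1
      have e0 := hrec 0
      have em := hrec (-1)
      norm_num at e2 e1 e0 em ⊢
      linear_combination -e2 - e1 - e0 - em
    · have hm : 1 ≤ m := by omega
      have ihm := ih hm
      rw [Finset.sum_Icc_succ_top (by omega : 1 ≤ m + 1), ihm]
      rw [div_add' _ _ _ h, div_eq_div_iff h h]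
      have e := hrec (-(m : ℤ) - 1)
      push_cast
      ring_nf
      ring_nf at e
      linear_combination -(r + s + t - 1) * e
end

section
/- Let W : ℤ → ℂ satisfy W(n) = r·W(n-1) + s·W(n-2) + t·W(n-3) for all integers n, with t ≠ 0 and (r+s+t-1)(r-s+t+1) ≠ 0. Then for all n ≥ 1, ∑_{k=1}^{n} W(-2k) = (-(r+t)·W(-2n+1) + (r²+rt+s-1)·W(-2n) + (st-t)·W(-2n-1) + (1-s)·W(2) + (t+rs)·W(1) + (1-rt-2s-r²+s²)·W(0)) / ((r+s+t-1)(r-s+t+1)). -/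
lemma trib_key (W : ℤ → ℂ) (r s t : ℂ)
    (hrec : ∀ n : ℤ, W n = r * W (n-1) + s * W (n-2) + t * W (n-3)) (m : ℤ) :
    (r+s+t-1) * (r-s+t+1) * W (m-2) =
      (-(r+t) * W (m-1) + (r^2+r*t+s-1) * W (m-2) + (s*t-t) * W (m-3))
      - (-(r+t) * W (m+1) + (r^2+r*t+s-1) * W m + (s*t-t) * W (m-1)) := by
  have hA : W (m+1) = r * W m + s * W (m-1) + t * W (m-2) := by
    have := hrec (m+1)
    simpa [show m+1-1 = m by ring, show m+1-2 = m-1 by ring,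
      show m+1-3 = m-2 by ring] using this
  have hB : W m = r * W (m-1) + s * W (m-2) + t * W (m-3) := hrec m
  rw [hA, hB]; ring

theorem sum_gen_tribonacci_neg_even (W : ℤ → ℂ) (r s t : ℂ)
    (hrec : ∀ n : ℤ, W n = r * W (n-1) + s * W (n-2) + t * W (n-3))
    (ht : t ≠ 0) (h : (r+s+t-1) * (r-s+t+1) ≠ 0) :
    ∀ n : ℕ, 1 ≤ n →
      ∑ k ∈ Finset.Icc 1 n, W (-(2 * k : ℤ)) =
        (-(r+t) * W (-(2*n : ℤ)+1) + (r^2+r*t+s-1) * W (-(2*n : ℤ))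
          + (s*t-t) * W (-(2*n : ℤ)-1)
          + (1-s) * W 2 + (t+r*s) * W 1 + (1-r*t-2*s-r^2+s^2) * W 0)
        / ((r+s+t-1) * (r-s+t+1)) := by
  intro n hn
  induction n, hn using Nat.le_induction with
  | base =>
      have h2 : W 2 = r * W 1 + s * W 0 + t * W (-1) := by
        have := hrec 2; norm_num at this; exact this
      have h1 : W 1 = r * W 0 + s * W (-1) + t * W (-2) := by
        have := hrec 1; norm_num at this; exact this
      have h0 : W 0 = r * W (-1) + s * W (-2) + t * W (-3) := by
        have := hrec 0; norm_num at this; exact this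
      rw [Finset.Icc_self, Finset.sum_singleton, eq_div_iff h]
      push_cast
      norm_num
      linear_combination (s-1)*h2 - (r+t)*h1 + (s-1)*h0
  | succ n hn ih =>
      rw [Finset.sum_Icc_succ_top (by omega : 1 ≤ n+1), ih]
      have key := trib_key W r s t hrec (-(2*(n:ℤ)))
      rw [div_add' _ _ _ h, div_eq_div_iff h h]
      push_cast
      push_cast at key
      simp only [show (-(2*((n:ℤ)+1)) : ℤ) = -(2*(n:ℤ))-2 by ring,
        show (-(2*((n:ℤ)+1))+1 : ℤ) = -(2*(n:ℤ))-1 by ring,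
        show (-(2*((n:ℤ)+1))-1 : ℤ) = -(2*(n:ℤ))-3 by ring,
        show (-(2*(n:ℤ))-2+1 : ℤ) = -(2*(n:ℤ))-1 by ring,
        show (-(2*(n:ℤ))-2-1 : ℤ) = -(2*(n:ℤ))-3 by ring]
      linear_combination ((r+s+t-1) * (r-s+t+1)) * key
end
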